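/- For p ≥ 1, the function F_p(a,b) = (a((1-a)² + b²) + (p-2)b²)/((1-a)² + b²)² satisfies F_p(a,b) ≥ -1/4 for all (a,b) in the closed unit disk with (a,b) ≠ (1,0), and the value -1/4 is attained at (a,b) = (-1,0). -/
import Mathlib

theorem stmt_8 (p : ℝ) (hp : 1 ≤ p) :
    (∀ a b : ℝ, a^2 + b^2 ≤ 1 → (a, b) ≠ (1, 0) →
      (a * ((1-a)^2 + b^2) + (p-2) * b^2) / ((1-a)^2 + b^2)^2 ≥ -1/4) ∧
    ((-1 : ℝ) * ((1-(-1:ℝ))^2 + (0:ℝ)^2) + (p-2) * (0:ℝ)^2) / ((1-(-1:ℝ))^2 + (0:ℝ)^2)^2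
      = -1/4 := by
  constructor
  · intro a b hab hne
    have h : a ≠ 1 ∨ b ≠ 0 := by
      by_contra h; push_neg at h; exact hne (by simp [h.1, h.2])
    have hD : (1-a)^2 + b^2 > 0 := by
      rcases h with h | h
      · have h1 : (1 - a) ≠ 0 := sub_ne_zero.mpr (Ne.symm h)
        positivity
      · positivity
    rw [ge_iff_le, le_div_iff₀ (by positivity)]
    nlinarith [sq_nonneg (1 - (a^2+b^2)), mul_nonneg (sub_nonneg.mpr hp) (sq_nonneg b)]
  · norm_num
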